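/- For all x, y ∈ ℝ, the function b satisfies the fourth-order identity b_{xxxx}·b − 4·b_{xxx}·b_x + 3·b_{xx}² = −12·(b_{xx}·b − b_x²) − 3·(b_{yy}·b − b_y²), where all functions are evaluated at (x,y). -/

import Mathlib

/-- First partial derivative (with respect to the first variable) of a function of two
real variables. -/
noncomputable def pd1 (f : ℝ → ℝ → ℝ) (x y : ℝ) : ℝ := deriv (fun t => f t y) x

/-- Second partial derivative (with respect to the second variable) of a function of two
real variables. -/
noncomputable def pd2 (f : ℝ → ℝ → ℝ) (x y : ℝ) : ℝ := deriv (fun t => f x t) y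

/-- The blow-up series `b(t₂,t₃)` of the U(3) blow-up formula for manifolds of simple
type. -/
noncomputable def bFun (x y : ℝ) : ℝ :=
  (1 / 3) * Real.exp (-x ^ 2 / 2 + y ^ 2) *
    (Real.cosh (Real.sqrt 3 * x) + 2 * Real.cos (Real.sqrt 3 * y))

section aux

local notation "s" => Real.sqrt 3

/-- exponent has derivative -x in x -/
lemma hExpArg (y x : ℝ) : HasDerivAt (fun t : ℝ => -t ^ 2 / 2 + y ^ 2) (-x) x := by
  have h := ((hasDerivAt_pow 2 x).neg.div_const 2).add_const (y ^ 2)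
  have hf : (fun t : ℝ => -t ^ 2 / 2 + y ^ 2) = fun t : ℝ => -(t ^ 2) / 2 + y ^ 2 := by
    funext t; ring
  rw [hf]
  convert (config := {preTransparency := .default}) h using 1; ring

lemma hE (y x : ℝ) :
    HasDerivAt (fun t : ℝ => Real.exp (-t ^ 2 / 2 + y ^ 2))
      (Real.exp (-x ^ 2 / 2 + y ^ 2) * -x) x :=
  (hExpArg y x).exp

lemma hCosh (x : ℝ) :
    HasDerivAt (fun t : ℝ => Real.cosh (s * t)) (Real.sinh (s * x) * s) x :=
  (Real.hasDerivAt_cosh (s * x)).comp x (by simpa using (hasDerivAt_id x).const_mul s)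

lemma hSinh (x : ℝ) :
    HasDerivAt (fun t : ℝ => Real.sinh (s * t)) (Real.cosh (s * x) * s) x :=
  (Real.hasDerivAt_sinh (s * x)).comp x (by simpa using (hasDerivAt_id x).const_mul s)

lemma hCos (y : ℝ) :
    HasDerivAt (fun t : ℝ => Real.cos (s * t)) (-Real.sin (s * y) * s) y :=
  (Real.hasDerivAt_cos (s * y)).comp y (by simpa using (hasDerivAt_id y).const_mul s)

lemma hSin (y : ℝ) :
    HasDerivAt (fun t : ℝ => Real.sin (s * t)) (Real.cos (s * y) * s) y :=
  (Real.hasDerivAt_sin (s * y)).comp y (by simpa using (hasDerivAt_id y).const_mul s)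

lemma hEy (x y : ℝ) :
    HasDerivAt (fun t : ℝ => Real.exp (-x ^ 2 / 2 + t ^ 2))
      (Real.exp (-x ^ 2 / 2 + y ^ 2) * (2 * y)) y := by
  have h : HasDerivAt (fun t : ℝ => -x ^ 2 / 2 + t ^ 2) (2 * y) y := by
    have := (hasDerivAt_pow 2 y).const_add (-x ^ 2 / 2)
    simpa using this
  exact h.exp

/-- abbreviations for the successive x-derivatives -/
noncomputable def bb1 (y x : ℝ) : ℝ :=
  (1 / 3) * Real.exp (-x ^ 2 / 2 + y ^ 2) *
    (-x * (Real.cosh (s * x) + 2 * Real.cos (s * y)) + s * Real.sinh (s * x))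

noncomputable def bb2 (y x : ℝ) : ℝ :=
  (1 / 3) * Real.exp (-x ^ 2 / 2 + y ^ 2) *
    ((x ^ 2 - 1) * (Real.cosh (s * x) + 2 * Real.cos (s * y)) + 3 * Real.cosh (s * x)
      - 2 * x * (s * Real.sinh (s * x)))

noncomputable def bb3 (y x : ℝ) : ℝ :=
  (1 / 3) * Real.exp (-x ^ 2 / 2 + y ^ 2) *
    ((-x ^ 3 + 3 * x) * (Real.cosh (s * x) + 2 * Real.cos (s * y)) - 9 * x * Real.cosh (s * x)
      + 3 * x ^ 2 * (s * Real.sinh (s * x)))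

noncomputable def bb4 (y x : ℝ) : ℝ :=
  (1 / 3) * Real.exp (-x ^ 2 / 2 + y ^ 2) *
    ((x ^ 4 - 6 * x ^ 2 + 3) * (Real.cosh (s * x) + 2 * Real.cos (s * y))
      + (18 * x ^ 2 - 9) * Real.cosh (s * x) - 4 * x ^ 3 * (s * Real.sinh (s * x)))

noncomputable def cc1 (x y : ℝ) : ℝ :=
  (1 / 3) * Real.exp (-x ^ 2 / 2 + y ^ 2) *
    (2 * y * (Real.cosh (s * x) + 2 * Real.cos (s * y)) - 2 * (s * Real.sin (s * y)))

noncomputable def cc2 (x y : ℝ) : ℝ :=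
  (1 / 3) * Real.exp (-x ^ 2 / 2 + y ^ 2) *
    ((4 * y ^ 2 + 2) * (Real.cosh (s * x) + 2 * Real.cos (s * y))
      - 8 * y * (s * Real.sin (s * y)) - 6 * Real.cos (s * y))

lemma hs3 : s * s = 3 := Real.mul_self_sqrt (by norm_num)

lemma hb0 (y x : ℝ) : HasDerivAt (fun t => bFun t y) (bb1 y x) x := by
  unfold bFun bb1
  have h := ((hE y x).const_mul (1 / 3 : ℝ)).mul
    ((hCosh x).add_const (2 * Real.cos (s * y)))
  convert (config := {preTransparency := .default}) h using 1
  ring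

lemma hb1 (y x : ℝ) : HasDerivAt (bb1 y) (bb2 y x) x := by
  unfold bb1 bb2
  have hP : HasDerivAt
      (fun t : ℝ => -t * (Real.cosh (s * t) + 2 * Real.cos (s * y)) + s * Real.sinh (s * t))
      (-1 * (Real.cosh (s * x) + 2 * Real.cos (s * y)) +
        -x * (Real.sinh (s * x) * s) + s * (Real.cosh (s * x) * s)) x := by
    have h1 := ((hasDerivAt_id x).neg.mul ((hCosh x).add_const (2 * Real.cos (s * y))))
    have h2 := (hSinh x).const_mul s
    convert (config := {preTransparency := .default}) h1.add h2 using 1 <;> ((try simp only [id_eq]) <;> try ring)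
  have h := ((hE y x).const_mul (1 / 3 : ℝ)).mul hP
  convert (config := {preTransparency := .default}) h using 1
  linear_combination (-(1 / 3) * Real.exp (-x ^ 2 / 2 + y ^ 2) * Real.cosh (s * x)) * hs3

lemma hb2 (y x : ℝ) : HasDerivAt (bb2 y) (bb3 y x) x := by
  unfold bb2 bb3
  have hP : HasDerivAt
      (fun t : ℝ => (t ^ 2 - 1) * (Real.cosh (s * t) + 2 * Real.cos (s * y))
        + 3 * Real.cosh (s * t) - 2 * t * (s * Real.sinh (s * t)))
      ((2 * x) * (Real.cosh (s * x) + 2 * Real.cos (s * y))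
        + (x ^ 2 - 1) * (Real.sinh (s * x) * s) + 3 * (Real.sinh (s * x) * s)
        - (2 * (s * Real.sinh (s * x)) + 2 * x * (s * (Real.cosh (s * x) * s)))) x := by
    have h1 := ((hasDerivAt_pow 2 x).sub_const 1).mul
      ((hCosh x).add_const (2 * Real.cos (s * y)))
    have h2 := (hCosh x).const_mul (3 : ℝ)
    have h3 := ((hasDerivAt_id x).const_mul (2 : ℝ)).mul ((hSinh x).const_mul s)
    convert (config := {preTransparency := .default}) (h1.add h2).sub h3 using 1 <;> ((try simp only [id_eq]) <;> (try push_cast) <;> try ring)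
  have h := ((hE y x).const_mul (1 / 3 : ℝ)).mul hP
  convert (config := {preTransparency := .default}) h using 1
  linear_combination ((2 / 3) * x * Real.exp (-x ^ 2 / 2 + y ^ 2) * Real.cosh (s * x)) * hs3

lemma hb3 (y x : ℝ) : HasDerivAt (bb3 y) (bb4 y x) x := by
  unfold bb3 bb4
  have hP : HasDerivAt
      (fun t : ℝ => (-t ^ 3 + 3 * t) * (Real.cosh (s * t) + 2 * Real.cos (s * y))
        - 9 * t * Real.cosh (s * t) + 3 * t ^ 2 * (s * Real.sinh (s * t)))
      ((-(3 * x ^ 2) + 3) * (Real.cosh (s * x) + 2 * Real.cos (s * y))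
        + (-x ^ 3 + 3 * x) * (Real.sinh (s * x) * s)
        - (9 * Real.cosh (s * x) + 9 * x * (Real.sinh (s * x) * s))
        + (6 * x * (s * Real.sinh (s * x)) + 3 * x ^ 2 * (s * (Real.cosh (s * x) * s)))) x := by
    have hp1 : HasDerivAt (fun t : ℝ => -t ^ 3 + 3 * t) (-(3 * x ^ 2) + 3) x := by
      have := ((hasDerivAt_pow 3 x).neg.add ((hasDerivAt_id x).const_mul (3 : ℝ)))
      convert (config := {preTransparency := .default}) this using 1 <;> ((try simp only [id_eq]) <;> (try push_cast) <;> try ring)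
    have h1 := hp1.mul ((hCosh x).add_const (2 * Real.cos (s * y)))
    have h2 : HasDerivAt (fun t : ℝ => 9 * t * Real.cosh (s * t))
        (9 * Real.cosh (s * x) + 9 * x * (Real.sinh (s * x) * s)) x := by
      have hp : HasDerivAt (fun t : ℝ => 9 * t) (9 : ℝ) x := by
        simpa using (hasDerivAt_id x).const_mul (9 : ℝ)
      have := hp.mul (hCosh x)
      convert (config := {preTransparency := .default}) this using 1 <;> ((try simp only [id_eq]) <;> (try push_cast) <;> try ring)
    have h3 : HasDerivAt (fun t : ℝ => 3 * t ^ 2 * (s * Real.sinh (s * t)))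
        (6 * x * (s * Real.sinh (s * x)) + 3 * x ^ 2 * (s * (Real.cosh (s * x) * s))) x := by
      have hp : HasDerivAt (fun t : ℝ => 3 * t ^ 2) (6 * x) x := by
        have := (hasDerivAt_pow 2 x).const_mul (3 : ℝ)
        convert (config := {preTransparency := .default}) this using 1 <;> ((try simp only [id_eq]) <;> (try push_cast) <;> try ring)
      have := hp.mul ((hSinh x).const_mul s)
      convert (config := {preTransparency := .default}) this using 1 <;> ((try simp only [id_eq]) <;> (try push_cast) <;> try ring)
    convert (config := {preTransparency := .default}) (h1.sub h2).add h3 using 1 <;> ((try simp only [id_eq]) <;> (try push_cast) <;> try ring)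
  have h := ((hE y x).const_mul (1 / 3 : ℝ)).mul hP
  convert (config := {preTransparency := .default}) h using 1
  linear_combination (-(x ^ 2) * Real.exp (-x ^ 2 / 2 + y ^ 2) * Real.cosh (s * x)) * hs3

lemma hc0 (x y : ℝ) : HasDerivAt (fun t => bFun x t) (cc1 x y) y := by
  unfold bFun cc1
  have hK : HasDerivAt (fun t : ℝ => Real.cosh (s * x) + 2 * Real.cos (s * t))
      (2 * (-Real.sin (s * y) * s)) y := by
    have := ((hCos y).const_mul (2 : ℝ)).const_add (Real.cosh (s * x))
    convert (config := {preTransparency := .default}) this using 1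
  have h := ((hEy x y).const_mul (1 / 3 : ℝ)).mul hK
  convert (config := {preTransparency := .default}) h using 1
  ring

lemma hc1 (x y : ℝ) : HasDerivAt (cc1 x) (cc2 x y) y := by
  unfold cc1 cc2
  have hP : HasDerivAt
      (fun t : ℝ => 2 * t * (Real.cosh (s * x) + 2 * Real.cos (s * t)) - 2 * (s * Real.sin (s * t)))
      (2 * (Real.cosh (s * x) + 2 * Real.cos (s * y))
        + 2 * y * (2 * (-Real.sin (s * y) * s)) - 2 * (s * (Real.cos (s * y) * s))) y := by
    have hp : HasDerivAt (fun t : ℝ => 2 * t) (2 : ℝ) y := by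
      simpa using (hasDerivAt_id y).const_mul (2 : ℝ)
    have hK : HasDerivAt (fun t : ℝ => Real.cosh (s * x) + 2 * Real.cos (s * t))
        (2 * (-Real.sin (s * y) * s)) y := by
      have := ((hCos y).const_mul (2 : ℝ)).const_add (Real.cosh (s * x))
      convert (config := {preTransparency := .default}) this using 1
    have h1 := hp.mul hK
    have h2 := (hSin y).const_mul (2 * s : ℝ)
    convert (config := {preTransparency := .default}) h1.sub (by simpa [mul_assoc] using h2) using 1 <;> ((try simp only [id_eq]) <;> try ring)
  have h := ((hEy x y).const_mul (1 / 3 : ℝ)).mul hP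
  convert (config := {preTransparency := .default}) h using 1
  linear_combination ((2 / 3) * Real.exp (-x ^ 2 / 2 + y ^ 2) * Real.cos (s * y)) * hs3

end aux

/-- The third blow-up differential equation (with point classes
specialized to `a₂ = 3`, `a₃ = 0`):
`b_{xxxx}·b − 4 b_{xxx}·b_x + 3 (b_{xx})² = −12 (b_{xx}·b − (b_x)²) − 3 (b_{yy}·b − (b_y)²)`. -/
theorem stmt4 (x y : ℝ) :
    pd1 (pd1 (pd1 (pd1 bFun))) x y * bFun x y
      - 4 * pd1 (pd1 (pd1 bFun)) x y * pd1 bFun x y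
      + 3 * (pd1 (pd1 bFun) x y) ^ 2 =
    -12 * (pd1 (pd1 bFun) x y * bFun x y - (pd1 bFun x y) ^ 2)
      - 3 * (pd2 (pd2 bFun) x y * bFun x y - (pd2 bFun x y) ^ 2) := by
  have e1 : pd1 bFun = fun x y => bb1 y x := by
    funext a b; exact (hb0 b a).deriv
  have e2 : pd1 (pd1 bFun) = fun x y => bb2 y x := by
    funext a b; rw [e1]; exact (hb1 b a).deriv
  have e3 : pd1 (pd1 (pd1 bFun)) = fun x y => bb3 y x := by
    funext a b; rw [e2]; exact (hb2 b a).deriv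
  have e4 : pd1 (pd1 (pd1 (pd1 bFun))) = fun x y => bb4 y x := by
    funext a b; rw [e3]; exact (hb3 b a).deriv
  have f1 : pd2 bFun = cc1 := by
    funext a b; exact (hc0 a b).deriv
  have f2 : pd2 (pd2 bFun) = cc2 := by
    funext a b; rw [f1]; exact (hc1 a b).deriv
  rw [e4, e3, e2, f2, f1, e1]
  unfold bFun bb1 bb2 bb3 bb4 cc1 cc2
  set S := Real.sinh (Real.sqrt 3 * x) with hS
  set C := Real.cosh (Real.sqrt 3 * x) with hC
  set si := Real.sin (Real.sqrt 3 * y) with hsi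
  set co := Real.cos (Real.sqrt 3 * y) with hco
  set E := Real.exp (-x ^ 2 / 2 + y ^ 2) with hEdef
  have h1 : C ^ 2 - S ^ 2 = 1 := Real.cosh_sq_sub_sinh_sq _
  have h2 : si ^ 2 + co ^ 2 = 1 := Real.sin_sq_add_cos_sq _
  have h3 : Real.sqrt 3 * Real.sqrt 3 = 3 := Real.mul_self_sqrt (by norm_num)
  linear_combination (-(4 / 3) * (S ^ 2 + si ^ 2) * E ^ 2) * h3
    + (4 * E ^ 2) * h1 + (-4 * E ^ 2) * h2
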